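/- Let n ≥ 1, let a_1,…,a_n and b_1,…,b_n be positive real numbers, let p_0 ∈ [0,1], and define recursively p_j = a_j·p_{j−1} / (a_j·p_{j−1} + b_j·(1−p_{j−1})) for 1 ≤ j ≤ n. Then p_n·(1−p_n) ≥ p_0·(1−p_0)·exp(−∑_{j=1}^n |ln(a_j/b_j)|). -/

import Mathlib

lemma exp_neg_abs_log_div (a b : ℝ) (ha : 0 < a) (hb : 0 < b) :
    Real.exp (-|Real.log (a / b)|) = min a b / max a b := by
  rcases le_total a b with h | h
  · rw [min_eq_left h, max_eq_right h]
    have hlog : Real.log (a / b) ≤ 0 :=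
      Real.log_nonpos (by positivity) (by rw [div_le_one hb]; exact h)
    rw [abs_of_nonpos hlog, neg_neg, Real.exp_log (by positivity)]
  · rw [min_eq_right h, max_eq_left h]
    have hlog : 0 ≤ Real.log (a / b) :=
      Real.log_nonneg (by rw [le_div_iff₀ hb]; simpa using h)
    rw [abs_of_nonneg hlog, ← Real.log_inv, Real.exp_log (by positivity),
      inv_div]

lemma step_bound (a b p : ℝ) (ha : 0 < a) (hb : 0 < b) (hp : p ∈ Set.Icc (0:ℝ) 1) :
    (a * p / (a * p + b * (1 - p))) ∈ Set.Icc (0:ℝ) 1 ∧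
    (a * p / (a * p + b * (1 - p))) * (1 - a * p / (a * p + b * (1 - p)))
      ≥ p * (1 - p) * Real.exp (-|Real.log (a / b)|) := by
  obtain ⟨hp0, hp1⟩ := hp
  set D := a * p + b * (1 - p) with hD
  have hDmin : min a b ≤ D := by
    rcases le_total a b with h | h <;> simp only [min_eq_left, min_eq_right, h] <;> nlinarith
  have hDmax : D ≤ max a b := by
    rcases le_total a b with h | h <;> simp only [max_eq_right, max_eq_left, h] <;> nlinarith
  have hDpos : 0 < D := lt_of_lt_of_le (lt_min ha hb) hDmin
  have hnum0 : 0 ≤ a * p := by positivity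
  have hnum1 : a * p ≤ D := by nlinarith
  have hq1 : 1 - a * p / D = b * (1 - p) / D := by
    field_simp; ring
  constructor
  · exact ⟨div_nonneg hnum0 hDpos.le, by rw [div_le_one hDpos]; exact hnum1⟩
  · rw [hq1, exp_neg_abs_log_div a b ha hb]
    have hmaxpos : 0 < max a b := lt_of_lt_of_le ha (le_max_left a b)
    have key : min a b * D ^ 2 ≤ a * b * max a b := by
      have h1 : D ^ 2 ≤ (max a b) ^ 2 := by nlinarith
      calc min a b * D ^ 2 ≤ min a b * (max a b) ^ 2 :=
            mul_le_mul_of_nonneg_left h1 (lt_min ha hb).le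
        _ = a * b * max a b := by rw [pow_two, ← mul_assoc, min_mul_max]
    have hq : a * p / D * (b * (1 - p) / D) = p * (1 - p) * (a * b / D ^ 2) := by
      field_simp
    rw [hq]
    apply mul_le_mul_of_nonneg_left _ (by nlinarith : (0:ℝ) ≤ p * (1 - p))
    rw [div_le_div_iff₀ hmaxpos (by positivity)]
    exact key

theorem stmt_1 (n : ℕ) (hn : 1 ≤ n) (a b : ℕ → ℝ)
    (ha : ∀ j, 1 ≤ j → j ≤ n → 0 < a j) (hb : ∀ j, 1 ≤ j → j ≤ n → 0 < b j)
    (p : ℕ → ℝ) (hp0 : p 0 ∈ Set.Icc (0 : ℝ) 1)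
    (hrec : ∀ j, 1 ≤ j → j ≤ n →
      p j = a j * p (j - 1) / (a j * p (j - 1) + b j * (1 - p (j - 1)))) :
    p n * (1 - p n)
      ≥ p 0 * (1 - p 0) * Real.exp (-(∑ j ∈ Finset.Icc 1 n, |Real.log (a j / b j)|)) := by
  clear hn
  suffices H : ∀ m, m ≤ n → p m ∈ Set.Icc (0:ℝ) 1 ∧
      p m * (1 - p m) ≥ p 0 * (1 - p 0) *
        Real.exp (-(∑ j ∈ Finset.Icc 1 m, |Real.log (a j / b j)|)) from
    (H n le_rfl).2
  intro m
  induction m with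
  | zero => intro _; simp [hp0]
  | succ k ih =>
    intro hkn
    obtain ⟨hik, hbd⟩ := ih (le_of_lt (Nat.lt_of_succ_le hkn))
    have h1 : 1 ≤ k + 1 := Nat.le_add_left 1 k
    have hrecs := hrec (k+1) h1 hkn
    simp only [Nat.add_sub_cancel] at hrecs
    obtain ⟨hmem, hstep⟩ := step_bound (a (k+1)) (b (k+1)) (p k)
      (ha _ h1 hkn) (hb _ h1 hkn) hik
    rw [← hrecs] at hmem hstep
    refine ⟨hmem, ?_⟩
    rw [Finset.sum_Icc_succ_top h1, neg_add, Real.exp_add, ← mul_assoc]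
    calc p 0 * (1 - p 0) * Real.exp (-(∑ j ∈ Finset.Icc 1 k, |Real.log (a j / b j)|))
          * Real.exp (-|Real.log (a (k+1) / b (k+1))|)
        ≤ p k * (1 - p k) * Real.exp (-|Real.log (a (k+1) / b (k+1))|) := by
          apply mul_le_mul_of_nonneg_right hbd (Real.exp_nonneg _)
      _ ≤ p (k+1) * (1 - p (k+1)) := hstep
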